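/- Suppose 1 ≤ k ≤ d−1 and let i* ∈ {1,...,n} be an index minimizing f({i}) over all singletons i ∈ {1,...,n}. Then every subset S ⊆ {1,...,n} with |S| = k and i* ∈ S satisfies f(S) ≤ ((d−1)/(d−k))·z_k. In particular, the output S_F of the forward greedy algorithm (which begins with S = {i*} and at each step adds the element minimizing the resulting value of f until |S| = k) satisfies f(S_F) ≤ ((d−1)/(d−k))·z_k. -/

import Mathlib

open Matrix Finset

noncomputable section


/-- The information matrix `∑_{i ∈ S} a_i a_iᵀ + λ I_d`. -/
def infoM (d n : ℕ) (a : Fin n → Fin d → ℝ) (lam : ℝ) (S : Finset (Fin n)) :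
    Matrix (Fin d) (Fin d) ℝ :=
  (∑ i ∈ S, Matrix.vecMulVec (a i) (a i)) + lam • (1 : Matrix (Fin d) (Fin d) ℝ)

/-- `f(S) = tr((∑_{i∈S} a_i a_iᵀ + λ I_d)⁻¹)`. -/
def fS (d n : ℕ) (a : Fin n → Fin d → ℝ) (lam : ℝ) (S : Finset (Fin n)) : ℝ :=
  Matrix.trace (infoM d n a lam S)⁻¹

/-- `z_k = min_{|S| = k} f(S)`. -/
def zk (d n : ℕ) (a : Fin n → Fin d → ℝ) (lam : ℝ) (k : ℕ) : ℝ :=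
  sInf {r : ℝ | ∃ S : Finset (Fin n), S.card = k ∧ fS d n a lam S = r}

end


section Aux
variable {d n : ℕ}

lemma quad_vecMulVec (u x : Fin d → ℝ) :
    x ⬝ᵥ (vecMulVec u u *ᵥ x) = (u ⬝ᵥ x)^2 := by
  simp only [vecMulVec_apply, mulVec, dotProduct, Finset.mul_sum, Finset.sum_mul]
  rw [pow_two, Finset.sum_mul_sum]
  simp [mul_comm, mul_left_comm, mul_assoc]

lemma herm_vecMulVec (u : Fin d → ℝ) : (vecMulVec u u).IsHermitian := by
  ext i j; simp [vecMulVec_apply, conjTranspose_apply, mul_comm]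

lemma psd_vecMulVec (u : Fin d → ℝ) : (vecMulVec u u).PosSemidef := by
  refine Matrix.PosSemidef.of_dotProduct_mulVec_nonneg (herm_vecMulVec u) fun x => ?_
  simpa [quad_vecMulVec] using sq_nonneg (u ⬝ᵥ x)

lemma dot_self_nonneg (u : Fin d → ℝ) : 0 ≤ u ⬝ᵥ u :=
  Finset.sum_nonneg fun i _ => mul_self_nonneg _

lemma psd_sum {a : Fin n → Fin d → ℝ} (S : Finset (Fin n)) :
    (∑ i ∈ S, Matrix.vecMulVec (a i) (a i)).PosSemidef := by
  classical
  induction S using Finset.induction with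
  | empty => simpa using Matrix.PosSemidef.zero
  | insert _ _ h ih => rw [Finset.sum_insert h]; exact (psd_vecMulVec _).add ih

lemma sum_mulVec {ι : Type*} (S : Finset ι) (M : ι → Matrix (Fin d) (Fin d) ℝ)
    (x : Fin d → ℝ) : (∑ i ∈ S, M i) *ᵥ x = ∑ i ∈ S, (M i *ᵥ x) := by
  classical
  induction S using Finset.induction with
  | empty => simp
  | insert _ _ h ih => simp [Finset.sum_insert h, Matrix.add_mulVec, ih]

lemma dot_sum {ι : Type*} (S : Finset ι) (w : ι → Fin d → ℝ) (x : Fin d → ℝ) :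
    x ⬝ᵥ (∑ i ∈ S, w i) = ∑ i ∈ S, x ⬝ᵥ w i := by
  classical
  induction S using Finset.induction with
  | empty => simp
  | insert _ _ h ih => simp [Finset.sum_insert h, dotProduct_add, ih]

lemma quad_infoM (a : Fin n → Fin d → ℝ) (lam : ℝ) (S : Finset (Fin n)) (x : Fin d → ℝ) :
    x ⬝ᵥ (infoM d n a lam S *ᵥ x)
      = (∑ i ∈ S, (a i ⬝ᵥ x)^2) + lam * (x ⬝ᵥ x) := by
  rw [infoM, Matrix.add_mulVec, dotProduct_add, sum_mulVec, dot_sum]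
  simp only [quad_vecMulVec]
  congr 1
  rw [Matrix.smul_mulVec, Matrix.one_mulVec, dotProduct_smul, smul_eq_mul]

lemma herm_smul_one (lam : ℝ) : (lam • (1 : Matrix (Fin d) (Fin d) ℝ)).IsHermitian := by
  rw [Matrix.IsHermitian, Matrix.conjTranspose_smul, Matrix.conjTranspose_one, star_trivial]

lemma pd_infoM {lam : ℝ} (hlam : 0 < lam) (a : Fin n → Fin d → ℝ) (S : Finset (Fin n)) :
    (infoM d n a lam S).PosDef := by
  refine Matrix.PosDef.of_dotProduct_mulVec_pos ?_ ?_
  · exact (psd_sum S).1.add (herm_smul_one lam)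
  · intro x hx
    rw [star_trivial, quad_infoM]
    have h1 : 0 ≤ ∑ i ∈ S, (a i ⬝ᵥ x)^2 := Finset.sum_nonneg fun i _ => sq_nonneg _
    have h2 : 0 < x ⬝ᵥ x := by
      have := dotProduct_star_self_pos_iff (v := x) (R := ℝ)
      simpa [star_trivial] using this.mpr hx
    nlinarith

lemma infoM_mul_inv {lam : ℝ} (hlam : 0 < lam) (a : Fin n → Fin d → ℝ) (S : Finset (Fin n)) :
    infoM d n a lam S * (infoM d n a lam S)⁻¹ = 1 :=
  Matrix.mul_nonsing_inv _ (isUnit_iff_ne_zero.mpr (pd_infoM hlam a S).det_pos.ne')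

lemma infoM_symm (a : Fin n → Fin d → ℝ) (lam : ℝ) (S : Finset (Fin n)) :
    (infoM d n a lam S)ᵀ = infoM d n a lam S := by
  have h : (infoM d n a lam S).IsHermitian := (psd_sum S).1.add (herm_smul_one lam)
  simpa [Matrix.IsHermitian, Matrix.conjTranspose_eq_transpose_of_trivial] using h

/-- swap across symmetric matrix -/
lemma dot_symm_swap {N : Matrix (Fin d) (Fin d) ℝ} (hN : Nᵀ = N) (u v : Fin d → ℝ) :
    u ⬝ᵥ (N *ᵥ v) = (N *ᵥ u) ⬝ᵥ v := by
  rw [Matrix.dotProduct_mulVec]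
  congr 1
  rw [← Matrix.mulVec_transpose, hN]

/-- key antitonicity of quadratic form of inverse -/
lemma quad_inv_antitone {N M : Matrix (Fin d) (Fin d) ℝ}
    (hNs : Nᵀ = N) (hN : N.PosDef) (hNM : (M - N).PosSemidef)
    (hMinv : M * M⁻¹ = 1) (hNinv : N * N⁻¹ = 1) (x : Fin d → ℝ) :
    x ⬝ᵥ (M⁻¹ *ᵥ x) ≤ x ⬝ᵥ (N⁻¹ *ᵥ x) := by
  set y := M⁻¹ *ᵥ x with hy
  have hMy : M *ᵥ y = x := by
    rw [hy, Matrix.mulVec_mulVec, hMinv, Matrix.one_mulVec]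
  set z := N⁻¹ *ᵥ x - y with hz
  have hNz : N *ᵥ (N⁻¹ *ᵥ x) = x := by
    rw [Matrix.mulVec_mulVec, hNinv, Matrix.one_mulVec]
  have h1 : y ⬝ᵥ (N *ᵥ y) ≤ y ⬝ᵥ (M *ᵥ y) := by
    have := hNM.dotProduct_mulVec_nonneg y
    rw [star_trivial, Matrix.sub_mulVec, dotProduct_sub] at this
    linarith
  have h2 : (0:ℝ) ≤ z ⬝ᵥ (N *ᵥ z) := by
    have := hN.posSemidef.dotProduct_mulVec_nonneg z
    rwa [star_trivial] at this
  have expand : z ⬝ᵥ (N *ᵥ z)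
      = x ⬝ᵥ (N⁻¹ *ᵥ x) - 2 * (x ⬝ᵥ y) + y ⬝ᵥ (N *ᵥ y) := by
    rw [hz, Matrix.mulVec_sub, dotProduct_sub, sub_dotProduct, sub_dotProduct, hNz]
    have e1 : (N⁻¹ *ᵥ x) ⬝ᵥ (N *ᵥ y) = x ⬝ᵥ y := by
      rw [dot_symm_swap hNs, hNz]
    have e2 : (N⁻¹ *ᵥ x) ⬝ᵥ x = x ⬝ᵥ (N⁻¹ *ᵥ x) := dotProduct_comm _ _
    have e3 : y ⬝ᵥ x = x ⬝ᵥ y := dotProduct_comm _ _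
    rw [e1, e2, e3]; ring
  have hxy : x ⬝ᵥ y = y ⬝ᵥ (M *ᵥ y) := by rw [hMy, dotProduct_comm]
  have hxMinv : x ⬝ᵥ (M⁻¹ *ᵥ x) = x ⬝ᵥ y := rfl
  linarith

/-- trace of a matrix as sum of quadratic forms at basis vectors -/
lemma trace_eq_sum_quad (P : Matrix (Fin d) (Fin d) ℝ) :
    Matrix.trace P = ∑ j, (Pi.single j 1 : Fin d → ℝ) ⬝ᵥ (P *ᵥ Pi.single j 1) := by
  unfold Matrix.trace Matrix.diag
  congr 1; ext j
  simp [mulVec, dotProduct, Pi.single_apply, mul_ite, ite_mul, Finset.mul_sum]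

lemma trace_vecMulVec_mul (u : Fin d → ℝ) (P : Matrix (Fin d) (Fin d) ℝ) :
    Matrix.trace (vecMulVec u u * P) = u ⬝ᵥ (P *ᵥ u) := by
  unfold Matrix.trace Matrix.diag
  simp only [Matrix.mul_apply, vecMulVec_apply, mulVec, dotProduct, Finset.mul_sum]
  rw [Finset.sum_comm]
  congr 1; ext k; congr 1; ext j; ring

lemma trace_vecMulVec (u : Fin d → ℝ) :
    Matrix.trace (vecMulVec u u) = u ⬝ᵥ u := by
  unfold Matrix.trace Matrix.diag dotProduct
  simp [vecMulVec_apply]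

lemma vecMulVec_mul_vecMulVec (u : Fin d → ℝ) :
    vecMulVec u u * vecMulVec u u = (u ⬝ᵥ u) • vecMulVec u u := by
  ext i j
  simp only [Matrix.mul_apply, vecMulVec_apply, Matrix.smul_apply, smul_eq_mul, dotProduct]
  rw [Finset.sum_mul]
  congr 1; ext k; ring

end Aux

section Main
variable {d n : ℕ}

lemma infoM_singleton (a : Fin n → Fin d → ℝ) (lam : ℝ) (j : Fin n) :
    infoM d n a lam {j} = vecMulVec (a j) (a j) + lam • 1 := by
  simp [infoM]

lemma inv_singleton {lam : ℝ} (hlam : 0 < lam) (a : Fin n → Fin d → ℝ) (j : Fin n) :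
    (infoM d n a lam {j})⁻¹
      = lam⁻¹ • (1 : Matrix (Fin d) (Fin d) ℝ)
        - (lam⁻¹ * (lam + a j ⬝ᵥ a j)⁻¹) • vecMulVec (a j) (a j) := by
  have hs : 0 ≤ a j ⬝ᵥ a j := dot_self_nonneg _
  have hls : lam + a j ⬝ᵥ a j ≠ 0 := by positivity
  apply Matrix.inv_eq_right_inv
  rw [infoM_singleton]
  set s := a j ⬝ᵥ a j with hsdef
  set V := vecMulVec (a j) (a j) with hV
  set c₁ : ℝ := lam⁻¹ with hc₁
  set c₂ : ℝ := lam⁻¹ * (lam + s)⁻¹ with hc₂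
  have e1 : V * (c₁ • (1 : Matrix (Fin d) (Fin d) ℝ)) = c₁ • V := by
    rw [Matrix.mul_smul, Matrix.mul_one]
  have e2 : (lam • (1 : Matrix (Fin d) (Fin d) ℝ)) * (c₁ • 1) = (lam * c₁) • 1 := by
    rw [Matrix.smul_mul, Matrix.mul_smul, Matrix.one_mul, smul_smul]
  have e3 : V * (c₂ • V) = (c₂ * s) • V := by
    rw [Matrix.mul_smul, hV, vecMulVec_mul_vecMulVec, ← hsdef, smul_smul]
  have e4 : (lam • (1 : Matrix (Fin d) (Fin d) ℝ)) * (c₂ • V) = (lam * c₂) • V := by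
    rw [Matrix.smul_mul, Matrix.mul_smul, Matrix.one_mul, smul_smul]
  rw [mul_sub, add_mul, add_mul, e1, e2, e3, e4]
  have hc1 : lam * c₁ = 1 := mul_inv_cancel₀ hlam.ne'
  have hcc : c₁ = c₂ * s + lam * c₂ := by
    rw [hc₁, hc₂]; field_simp; ring
  rw [hc1, one_smul]
  rw [show c₁ • V + (1 : Matrix (Fin d) (Fin d) ℝ) - ((c₂ * s) • V + (lam * c₂) • V)
      = (c₁ - (c₂ * s + lam * c₂)) • V + 1 by rw [sub_smul, add_smul]; abel]
  rw [hcc, sub_self, zero_smul, zero_add]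

lemma trace_inv_singleton {lam : ℝ} (hlam : 0 < lam) (a : Fin n → Fin d → ℝ) (j : Fin n) :
    fS d n a lam {j}
      = lam⁻¹ * d - (lam⁻¹ * (lam + a j ⬝ᵥ a j)⁻¹) * (a j ⬝ᵥ a j) := by
  rw [fS, inv_singleton hlam, Matrix.trace_sub, Matrix.trace_smul, Matrix.trace_smul,
    Matrix.trace_one, trace_vecMulVec]
  simp [smul_eq_mul]

lemma quad_inv_singleton {lam : ℝ} (hlam : 0 < lam) (a : Fin n → Fin d → ℝ) (j : Fin n) :
    a j ⬝ᵥ ((infoM d n a lam {j})⁻¹ *ᵥ a j)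
      = (a j ⬝ᵥ a j) / (lam + a j ⬝ᵥ a j) := by
  have hs : 0 ≤ a j ⬝ᵥ a j := dot_self_nonneg _
  have hls : lam + a j ⬝ᵥ a j ≠ 0 := by positivity
  rw [inv_singleton hlam, Matrix.sub_mulVec, dotProduct_sub,
    Matrix.smul_mulVec, Matrix.smul_mulVec, Matrix.one_mulVec,
    dotProduct_smul, dotProduct_smul, quad_vecMulVec]
  set s := a j ⬝ᵥ a j with hsdef
  have hl0 : lam ≠ 0 := hlam.ne'
  simp only [smul_eq_mul]
  field_simp
  ring

end Main

section Main2
variable {d n : ℕ}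

lemma infoM_diff_psd (a : Fin n → Fin d → ℝ) (lam : ℝ) {S T : Finset (Fin n)}
    (hST : S ⊆ T) : (infoM d n a lam T - infoM d n a lam S).PosSemidef := by
  have : infoM d n a lam T - infoM d n a lam S
      = ∑ i ∈ T \ S, Matrix.vecMulVec (a i) (a i) := by
    rw [infoM, infoM, ← Finset.sum_sdiff hST]
    abel
  rw [this]
  exact psd_sum _

lemma fS_antitone {lam : ℝ} (hlam : 0 < lam) (a : Fin n → Fin d → ℝ)
    {S T : Finset (Fin n)} (hST : S ⊆ T) :
    fS d n a lam T ≤ fS d n a lam S := by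
  rw [fS, fS, trace_eq_sum_quad, trace_eq_sum_quad]
  refine Finset.sum_le_sum fun j _ => ?_
  exact quad_inv_antitone (infoM_symm a lam S) (pd_infoM hlam a S)
    (infoM_diff_psd a lam hST) (infoM_mul_inv hlam a T) (infoM_mul_inv hlam a S) _

lemma trace_identity {lam : ℝ} (hlam : 0 < lam) (a : Fin n → Fin d → ℝ)
    (S : Finset (Fin n)) :
    (∑ i ∈ S, a i ⬝ᵥ ((infoM d n a lam S)⁻¹ *ᵥ a i)) + lam * fS d n a lam S = d := by
  have h := infoM_mul_inv hlam a S
  rw [infoM, add_mul, Matrix.smul_mul, Matrix.one_mul, Finset.sum_mul] at h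
  have ht := congrArg Matrix.trace h
  rw [Matrix.trace_add, Matrix.trace_sum, Matrix.trace_smul, Matrix.trace_one] at ht
  simp only [trace_vecMulVec_mul, smul_eq_mul] at ht
  simpa [fS, infoM] using ht

lemma quad_bound {lam : ℝ} (hlam : 0 < lam) (a : Fin n → Fin d → ℝ)
    {S : Finset (Fin n)} {i : Fin n} (hi : i ∈ S) {b : ℝ} (hb0 : 0 ≤ b)
    (hib : a i ⬝ᵥ a i ≤ b) :
    a i ⬝ᵥ ((infoM d n a lam S)⁻¹ *ᵥ a i) ≤ b / (lam + b) := by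
  have hs : 0 ≤ a i ⬝ᵥ a i := dot_self_nonneg _
  have h1 : a i ⬝ᵥ ((infoM d n a lam S)⁻¹ *ᵥ a i)
      ≤ a i ⬝ᵥ ((infoM d n a lam {i})⁻¹ *ᵥ a i) :=
    quad_inv_antitone (infoM_symm a lam {i}) (pd_infoM hlam a {i})
      (infoM_diff_psd a lam (by simpa using hi)) (infoM_mul_inv hlam a S)
      (infoM_mul_inv hlam a {i}) _
  rw [quad_inv_singleton hlam] at h1
  refine h1.trans ?_
  rw [div_le_div_iff₀ (by positivity) (by positivity)]
  nlinarith

lemma fS_lower {lam : ℝ} (hlam : 0 < lam) (a : Fin n → Fin d → ℝ)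
    {S : Finset (Fin n)} {k : ℕ} (hc : S.card = k) {b : ℝ} (hb0 : 0 ≤ b)
    (hb : ∀ i ∈ S, a i ⬝ᵥ a i ≤ b) :
    ((d : ℝ) - k * (b / (lam + b))) / lam ≤ fS d n a lam S := by
  have hid := trace_identity hlam a S
  have hsum : ∑ i ∈ S, a i ⬝ᵥ ((infoM d n a lam S)⁻¹ *ᵥ a i) ≤ k * (b / (lam + b)) := by
    calc ∑ i ∈ S, a i ⬝ᵥ ((infoM d n a lam S)⁻¹ *ᵥ a i)
        ≤ ∑ i ∈ S, b / (lam + b) :=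
          Finset.sum_le_sum fun i hi => quad_bound hlam a hi hb0 (hb i hi)
      _ = k * (b / (lam + b)) := by rw [Finset.sum_const, hc, nsmul_eq_mul]
  rw [div_le_iff₀ hlam, mul_comm]
  linarith

lemma key_ineq {lam : ℝ} (hlam : 0 < lam) {b : ℝ} (hb0 : 0 ≤ b)
    {dr kr : ℝ} (hk1 : 1 ≤ kr) (hkd : kr + 1 ≤ dr) :
    ((dr - kr) / (dr - 1)) * (lam⁻¹ * dr - (lam⁻¹ * (lam + b)⁻¹) * b)
      ≤ (dr - kr * (b / (lam + b))) / lam := by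
  have hd1 : (0:ℝ) < dr - 1 := by linarith
  have hlb : (0:ℝ) < lam + b := by linarith
  set q : ℝ := b / (lam + b) with hq
  have hq1 : q ≤ 1 := by rw [hq, div_le_one hlb]; linarith
  have hX : lam⁻¹ * dr - (lam⁻¹ * (lam + b)⁻¹) * b = lam⁻¹ * (dr - q) := by
    rw [hq]; field_simp
  have hY : (dr - kr * q) / lam = lam⁻¹ * (dr - kr * q) := by
    rw [div_eq_inv_mul]
  rw [hX, hY, div_mul_eq_mul_div, div_le_iff₀ hd1]
  have hint : 0 ≤ lam⁻¹ * (dr * ((kr - 1) * (1 - q))) :=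
    mul_nonneg (inv_pos.mpr hlam).le (mul_nonneg (by linarith)
      (mul_nonneg (by linarith) (by linarith)))
  nlinarith [hint]

end Main2

theorem stmt18 (d n : ℕ) (hd : 1 ≤ d) (hdn : d ≤ n)
    (a : Fin n → Fin d → ℝ) (lam : ℝ) (hlam : 0 < lam)
    (k : ℕ) (hk1 : 1 ≤ k) (hkd : k < d)
    (istar : Fin n) (histar : ∀ j : Fin n, fS d n a lam {istar} ≤ fS d n a lam {j}) :
    (∀ S : Finset (Fin n), S.card = k → istar ∈ S →
      fS d n a lam S ≤ (((d : ℝ) - 1) / ((d : ℝ) - k)) * zk d n a lam k) ∧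
    (∀ T : ℕ → Finset (Fin n), T 1 = {istar} →
      (∀ j, 1 ≤ j → j < k → ∃ i, i ∉ T j ∧
        (∀ i', i' ∉ T j →
          fS d n a lam (insert i (T j)) ≤ fS d n a lam (insert i' (T j))) ∧
        T (j + 1) = insert i (T j)) →
      fS d n a lam (T k) ≤ (((d : ℝ) - 1) / ((d : ℝ) - k)) * zk d n a lam k) := by
  have hdr : ((k:ℝ) + 1) ≤ (d:ℝ) := by exact_mod_cast hkd
  have hkr : (1:ℝ) ≤ (k:ℝ) := by exact_mod_cast hk1
  have hdk : (0:ℝ) < (d:ℝ) - k := by linarith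
  have hd1 : (0:ℝ) < (d:ℝ) - 1 := by linarith
  have key : ∀ S : Finset (Fin n), S.card = k →
      ((d:ℝ)-k)/((d:ℝ)-1) * fS d n a lam {istar} ≤ fS d n a lam S := by
    intro S hc
    have hSne : S.Nonempty := Finset.card_pos.mp (by omega)
    obtain ⟨j, hjS, hjmax⟩ := S.exists_max_image (fun i => a i ⬝ᵥ a i) hSne
    set b := a j ⬝ᵥ a j with hb
    have hb0 : 0 ≤ b := dot_self_nonneg _
    have h1 : fS d n a lam {istar} ≤ lam⁻¹ * d - (lam⁻¹ * (lam + b)⁻¹) * b :=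
      (histar j).trans_eq (trace_inv_singleton hlam a j)
    have h2 := fS_lower hlam a hc hb0 hjmax
    have h3 := key_ineq hlam hb0 hkr hdr
    calc ((d:ℝ)-k)/((d:ℝ)-1) * fS d n a lam {istar}
        ≤ ((d:ℝ)-k)/((d:ℝ)-1) * (lam⁻¹ * d - (lam⁻¹ * (lam + b)⁻¹) * b) :=
          mul_le_mul_of_nonneg_left h1 (by positivity)
      _ ≤ ((d:ℝ) - k * (b/(lam+b)))/lam := h3
      _ ≤ fS d n a lam S := h2
  have hzk : ((d:ℝ)-k)/((d:ℝ)-1) * fS d n a lam {istar} ≤ zk d n a lam k := by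
    obtain ⟨S0, -, hS0⟩ := Finset.exists_subset_card_eq
      (s := (univ : Finset (Fin n))) (n := k) (by simp; omega)
    refine le_csInf ⟨fS d n a lam S0, S0, hS0, rfl⟩ ?_
    rintro r ⟨S, hc, rfl⟩
    exact key S hc
  have hstar_le : fS d n a lam {istar} ≤ ((d:ℝ)-1)/((d:ℝ)-k) * zk d n a lam k := by
    have h := mul_le_mul_of_nonneg_left hzk (le_of_lt (div_pos hd1 hdk))
    have hL : ((d:ℝ)-1)/((d:ℝ)-k) * (((d:ℝ)-k)/((d:ℝ)-1) * fS d n a lam {istar})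
        = fS d n a lam {istar} := by
      field_simp
    linarith [hL ▸ h]
  constructor
  · intro S hc hin
    exact (fS_antitone hlam a (Finset.singleton_subset_iff.mpr hin)).trans hstar_le
  · intro T hT1 hstep
    have claim : ∀ j, 1 ≤ j → j ≤ k → istar ∈ T j ∧ (T j).card = j := by
      intro j
      induction j with
      | zero => omega
      | succ m ih =>
        intro h1 hk'
        by_cases hm : m = 0
        · subst hm
          rw [hT1]
          simp
        · have hm1 : 1 ≤ m := Nat.one_le_iff_ne_zero.mpr hm
          obtain ⟨i, hiT, -, hTe⟩ := hstep m hm1 (by omega)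
          obtain ⟨hin, hcard⟩ := ih hm1 (by omega)
          refine ⟨?_, ?_⟩ <;> rw [hTe]
          · exact Finset.mem_insert_of_mem hin
          · rw [Finset.card_insert_of_notMem hiT, hcard]
    obtain ⟨hin, hcard⟩ := claim k hk1 le_rfl
    exact (fS_antitone hlam a (Finset.singleton_subset_iff.mpr hin)).trans hstar_le
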